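/- Let f₁, f₂ be linearly independent solutions on ℝ of y'' = g(z)y with g continuous. If the surface S = {(t·f₁(z), t·f₂(z), z) : |t| ≤ 1, z ∈ ℝ} contains a straight line other than the z-axis, then g ≡ 0. -/

import Mathlib

/-- Let `f₁, f₂` be linearly independent `C²` solutions on `ℝ` of `y'' = g(z)·y` with `g`
continuous.  If the strip `S = {(t·f₁(z), t·f₂(z), z) : |t| ≤ 1}` contains a straight line
other than the `z`-axis, then `g ≡ 0`. -/
theorem strip_line_forces_g_zero
    (g f₁ f₂ f₁' f₂' : ℝ → ℝ) (hg : Continuous g)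
    (hd₁ : ∀ z, HasDerivAt f₁ (f₁' z) z) (hd₁' : ∀ z, HasDerivAt f₁' (g z * f₁ z) z)
    (hd₂ : ∀ z, HasDerivAt f₂ (f₂' z) z) (hd₂' : ∀ z, HasDerivAt f₂' (g z * f₂ z) z)
    (hind : LinearIndependent ℝ ![f₁, f₂])
    (S : Set (ℝ × ℝ × ℝ))
    (hS : S = {p | ∃ t z : ℝ, |t| ≤ 1 ∧ p = (t * f₁ z, t * f₂ z, z)})
    (p₀ v : ℝ × ℝ × ℝ) (hv : v ≠ 0)
    (hline : ∀ s : ℝ, p₀ + s • v ∈ S)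
    (hnotz : {p | ∃ s : ℝ, p = p₀ + s • v} ≠ {p : ℝ × ℝ × ℝ | p.1 = 0 ∧ p.2.1 = 0}) :
    ∀ z, g z = 0 := by
  -- linear independence, pointwise form
  have hpair : ∀ α β : ℝ, (∀ z, α * f₁ z + β * f₂ z = 0) → α = 0 ∧ β = 0 := by
    intro α β h
    have h0 : (∑ i, (![α, β] : Fin 2 → ℝ) i • (![f₁, f₂] : Fin 2 → ℝ → ℝ) i) = 0 := by
      funext z
      simpa [Fin.sum_univ_two] using h z
    have := Fintype.linearIndependent_iff.mp hind ![α, β] h0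
    exact ⟨this 0, this 1⟩
  -- membership unfolding
  have hmem : ∀ s : ℝ, ∃ t z : ℝ, |t| ≤ 1 ∧ p₀ + s • v = (t * f₁ z, t * f₂ z, z) := by
    intro s
    have := hline s
    rw [hS] at this
    exact this
  by_cases hv3 : v.2.2 = 0
  · -- horizontal line: contradiction by unboundedness
    exfalso
    have hb : ∀ s : ℝ, |p₀.1 + s * v.1| ≤ |f₁ p₀.2.2| ∧ |p₀.2.1 + s * v.2.1| ≤ |f₂ p₀.2.2| := by
      intro s
      obtain ⟨t, z, ht, heq⟩ := hmem s
      have h1 : p₀.1 + s * v.1 = t * f₁ z := by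
        have := congrArg Prod.fst heq
        simpa [Prod.fst_add, Prod.smul_fst, smul_eq_mul] using this
      have h2 : p₀.2.1 + s * v.2.1 = t * f₂ z := by
        have := congrArg (fun p : ℝ × ℝ × ℝ => p.2.1) heq
        simpa [smul_eq_mul] using this
      have h3 : p₀.2.2 + s * v.2.2 = z := by
        have := congrArg (fun p : ℝ × ℝ × ℝ => p.2.2) heq
        simpa [smul_eq_mul] using this
      have hz : z = p₀.2.2 := by rw [← h3, hv3]; ring
      subst hz
      constructor
      · rw [h1, abs_mul]
        calc |t| * |f₁ p₀.2.2| ≤ 1 * |f₁ p₀.2.2| :=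
              mul_le_mul_of_nonneg_right ht (abs_nonneg _)
          _ = |f₁ p₀.2.2| := one_mul _
      · rw [h2, abs_mul]
        calc |t| * |f₂ p₀.2.2| ≤ 1 * |f₂ p₀.2.2| :=
              mul_le_mul_of_nonneg_right ht (abs_nonneg _)
          _ = |f₂ p₀.2.2| := one_mul _
    have hv12 : v.1 ≠ 0 ∨ v.2.1 ≠ 0 := by
      by_contra h
      push_neg at h
      exact hv (Prod.ext h.1 (Prod.ext h.2 hv3))
    rcases hv12 with h1 | h2
    · have := (hb ((|f₁ p₀.2.2| + 1 - p₀.1) / v.1)).1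
      rw [show p₀.1 + (|f₁ p₀.2.2| + 1 - p₀.1) / v.1 * v.1 = |f₁ p₀.2.2| + 1 by
        field_simp; ring] at this
      have habs : |f₁ p₀.2.2| ≥ 0 := abs_nonneg _
      rw [abs_of_nonneg (by linarith)] at this
      linarith
    · have := (hb ((|f₂ p₀.2.2| + 1 - p₀.2.1) / v.2.1)).2
      rw [show p₀.2.1 + (|f₂ p₀.2.2| + 1 - p₀.2.1) / v.2.1 * v.2.1 = |f₂ p₀.2.2| + 1 by
        field_simp; ring] at this
      have habs : |f₂ p₀.2.2| ≥ 0 := abs_nonneg _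
      rw [abs_of_nonneg (by linarith)] at this
      linarith
  · -- nondegenerate case: reparametrize by z
    set b₁ : ℝ := v.1 / v.2.2 with hb₁def
    set b₂ : ℝ := v.2.1 / v.2.2 with hb₂def
    set a₁ : ℝ := p₀.1 - p₀.2.2 * b₁ with ha₁def
    set a₂ : ℝ := p₀.2.1 - p₀.2.2 * b₂ with ha₂def
    have key : ∀ z : ℝ, ∃ t : ℝ, t * f₁ z = a₁ + b₁ * z ∧ t * f₂ z = a₂ + b₂ * z := by
      intro z
      obtain ⟨t, z', ht, heq⟩ := hmem ((z - p₀.2.2) / v.2.2)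
      have h3 : p₀.2.2 + (z - p₀.2.2) / v.2.2 * v.2.2 = z' := by
        have := congrArg (fun p : ℝ × ℝ × ℝ => p.2.2) heq
        simpa [smul_eq_mul] using this
      have hz : z' = z := by rw [← h3]; field_simp; ring
      subst hz
      refine ⟨t, ?_, ?_⟩
      · have h1 : p₀.1 + (z' - p₀.2.2) / v.2.2 * v.1 = t * f₁ z' := by
          have := congrArg Prod.fst heq
          simpa [Prod.fst_add, Prod.smul_fst, smul_eq_mul] using this
        rw [← h1, ha₁def, hb₁def]
        field_simp
        ring
      · have h2 : p₀.2.1 + (z' - p₀.2.2) / v.2.2 * v.2.1 = t * f₂ z' := by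
          have := congrArg (fun p : ℝ × ℝ × ℝ => p.2.1) heq
          simpa [smul_eq_mul] using this
        rw [← h2, ha₂def, hb₂def]
        field_simp
        ring
    -- key identity
    have hid : ∀ z : ℝ, f₁ z * (a₂ + b₂ * z) - f₂ z * (a₁ + b₁ * z) = 0 := by
      intro z
      obtain ⟨t, h1, h2⟩ := key z
      rw [← h1, ← h2]; ring
    -- differentiate once
    have hL₁ : ∀ z : ℝ, HasDerivAt (fun z => a₁ + b₁ * z) b₁ z := fun z => by
      simpa using ((hasDerivAt_id z).const_mul b₁).const_add a₁
    have hL₂ : ∀ z : ℝ, HasDerivAt (fun z => a₂ + b₂ * z) b₂ z := fun z => by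
      simpa using ((hasDerivAt_id z).const_mul b₂).const_add a₂
    have h1 : ∀ z : ℝ, f₁' z * (a₂ + b₂ * z) + f₁ z * b₂
        - (f₂' z * (a₁ + b₁ * z) + f₂ z * b₁) = 0 := by
      intro z
      have hD : HasDerivAt (fun z => f₁ z * (a₂ + b₂ * z) - f₂ z * (a₁ + b₁ * z))
          (f₁' z * (a₂ + b₂ * z) + f₁ z * b₂ - (f₂' z * (a₁ + b₁ * z) + f₂ z * b₁)) z :=
        ((hd₁ z).mul (hL₂ z)).sub ((hd₂ z).mul (hL₁ z))
      have h0 : (fun z => f₁ z * (a₂ + b₂ * z) - f₂ z * (a₁ + b₁ * z)) = fun _ => (0 : ℝ) :=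
        funext fun z => hid z
      rw [h0] at hD
      exact hD.unique (hasDerivAt_const z 0)
    -- differentiate twice
    have h2 : ∀ z : ℝ, f₁' z * b₂ = f₂' z * b₁ := by
      intro z
      have hD : HasDerivAt
          (fun z => f₁' z * (a₂ + b₂ * z) + f₁ z * b₂ - (f₂' z * (a₁ + b₁ * z) + f₂ z * b₁))
          (g z * f₁ z * (a₂ + b₂ * z) + f₁' z * b₂ + f₁' z * b₂
            - (g z * f₂ z * (a₁ + b₁ * z) + f₂' z * b₁ + f₂' z * b₁)) z := by
        exact (((hd₁' z).mul (hL₂ z)).add ((hd₁ z).mul_const b₂)).sub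
          ((((hd₂' z).mul (hL₁ z)).add ((hd₂ z).mul_const b₁)))
      have h0 : (fun z => f₁' z * (a₂ + b₂ * z) + f₁ z * b₂
          - (f₂' z * (a₁ + b₁ * z) + f₂ z * b₁)) = fun _ => (0 : ℝ) :=
        funext fun z => h1 z
      rw [h0] at hD
      have h00 := hD.unique (hasDerivAt_const z 0)
      linear_combination h00 / 2 - g z * hid z / 2
    by_cases hbb : b₁ = 0 ∧ b₂ = 0
    · -- line parallel to z-axis
      obtain ⟨hb1, hb2⟩ := hbb
      by_cases haa : a₁ = 0 ∧ a₂ = 0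
      · -- the line IS the z-axis: contradiction with hnotz
        exfalso
        apply hnotz
        have hv1 : v.1 = 0 := by
          have : v.1 / v.2.2 = 0 := hb1
          field_simp at this
          simpa using this
        have hv2 : v.2.1 = 0 := by
          have : v.2.1 / v.2.2 = 0 := hb2
          field_simp at this
          simpa using this
        have hp1 : p₀.1 = 0 := by
          have h := haa.1
          rw [ha₁def, hb1] at h
          simpa using h
        have hp2 : p₀.2.1 = 0 := by
          have h := haa.2
          rw [ha₂def, hb2] at h
          simpa using h
        ext p
        simp only [Set.mem_setOf_eq]
        constructor
        · rintro ⟨s, rfl⟩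
          constructor
          · simp [Prod.fst_add, Prod.smul_fst, smul_eq_mul, hp1, hv1]
          · simp [smul_eq_mul, hp2, hv2]
        · rintro ⟨h1', h2'⟩
          refine ⟨(p.2.2 - p₀.2.2) / v.2.2, ?_⟩
          have : p = (p.1, p.2.1, p.2.2) := rfl
          rw [this]
          refine Prod.ext ?_ (Prod.ext ?_ ?_)
          · simp [Prod.fst_add, Prod.smul_fst, smul_eq_mul, hp1, hv1, h1']
          · simp [smul_eq_mul, hp2, hv2, h2']
          · simp only [Prod.snd_add, Prod.smul_snd, smul_eq_mul]
            field_simp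
            ring
      · -- a's not both zero: contradicts independence
        exfalso
        have hdep : ∀ z, a₂ * f₁ z + (-a₁) * f₂ z = 0 := by
          intro z
          have := hid z
          rw [hb1, hb2] at this
          nlinarith [this]
        obtain ⟨h1', h2'⟩ := hpair a₂ (-a₁) hdep
        exact haa ⟨by linarith, h1'⟩
    · -- b's not both zero
      intro z₀
      by_cases hb1 : b₁ = 0
      · -- then b₂ ≠ 0 and f₁' ≡ 0
        have hb2 : b₂ ≠ 0 := fun h => hbb ⟨hb1, h⟩
        have hf1' : ∀ z, f₁' z = 0 := by
          intro z
          have := h2 z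
          rw [hb1] at this
          simp at this
          rcases this with h | h
          · exact h
          · exact absurd h hb2
        -- f₁ is constant
        have hconst : ∀ z, f₁ z = f₁ 0 := by
          intro z
          have : ∀ x, HasDerivAt f₁ 0 x := fun x => hf1' x ▸ hd₁ x
          have hdiff : Differentiable ℝ f₁ := fun x => (this x).differentiableAt
          have hderiv : ∀ x, deriv f₁ x = 0 := fun x => (this x).deriv
          exact is_const_of_deriv_eq_zero hdiff hderiv z 0
        have hf10 : f₁ 0 ≠ 0 := by
          intro h
          have : ∀ z, (1 : ℝ) * f₁ z + 0 * f₂ z = 0 := by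
            intro z; rw [hconst z, h]; ring
          exact one_ne_zero (hpair 1 0 this).1
        -- f₁' constant zero, so g z * f₁ z = 0
        have : f₁' = fun _ => (0 : ℝ) := funext hf1'
        have hgf : g z₀ * f₁ z₀ = 0 := by
          have hD := hd₁' z₀
          rw [this] at hD
          exact hD.unique (hasDerivAt_const z₀ 0)
        rw [hconst z₀] at hgf
        exact (mul_eq_zero.mp hgf).resolve_right hf10
      · -- b₁ ≠ 0: main case
        set k : ℝ := b₂ / b₁ with hkdef
        have hf2' : ∀ z, f₂' z = k * f₁' z := by
          intro z
          have := h2 z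
          rw [hkdef]
          field_simp
          linarith [this]
        -- f₂ - k f₁ is constant
        set c : ℝ := f₂ 0 - k * f₁ 0 with hcdef
        have hc : ∀ z, f₂ z = k * f₁ z + c := by
          intro z
          have hD : ∀ x, HasDerivAt (fun z => f₂ z - k * f₁ z) 0 x := by
            intro x
            have := (hd₂ x).sub ((hd₁ x).const_mul k)
            rw [hf2' x] at this
            exact this.congr_deriv (by ring)
          have hdiff : Differentiable ℝ (fun z => f₂ z - k * f₁ z) :=
            fun x => (hD x).differentiableAt
          have hderiv : ∀ x, deriv (fun z => f₂ z - k * f₁ z) x = 0 := fun x => (hD x).deriv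
          have := is_const_of_deriv_eq_zero hdiff hderiv z 0
          have hz := is_const_of_deriv_eq_zero hdiff hderiv z 0
          have : f₂ z - k * f₁ z = f₂ 0 - k * f₁ 0 := hz
          rw [hcdef]; linarith
        have hcne : c ≠ 0 := by
          intro h
          have : ∀ z, k * f₁ z + (-1) * f₂ z = 0 := by
            intro z; have := hc z; rw [h] at this; linarith
          have := (hpair k (-1) this).2
          norm_num at this
        -- Wronskian is constant
        set W : ℝ → ℝ := fun z => f₁ z * f₂' z - f₂ z * f₁' z with hWdef
        have hWD : ∀ x, HasDerivAt W 0 x := by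
          intro x
          have := ((hd₁ x).mul (hd₂' x)).sub ((hd₂ x).mul (hd₁' x))
          exact this.congr_deriv (by ring)
        have hWconst : ∀ z, W z = W 0 := by
          intro z
          exact is_const_of_deriv_eq_zero (fun x => (hWD x).differentiableAt)
            (fun x => (hWD x).deriv) z 0
        -- W z = -c * f₁' z
        have hWc : ∀ z, W z = -c * f₁' z := by
          intro z
          rw [hWdef]
          simp only
          rw [hf2' z, hc z]
          ring
        -- f₁' is constant
        have hf1'const : ∀ z, f₁' z = f₁' 0 := by
          intro z
          have h1' := hWc z
          have h2' := hWc 0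
          have h3' := hWconst z
          have : -c * f₁' z = -c * f₁' 0 := by rw [← h1', h3', h2']
          have hcne' : -c ≠ 0 := neg_ne_zero.mpr hcne
          exact mul_left_cancel₀ hcne' this
        -- so g z * f₁ z = 0 for all z
        have hgf1 : ∀ z, g z * f₁ z = 0 := by
          intro z
          have : f₁' = fun _ => f₁' 0 := funext hf1'const
          have hD := hd₁' z
          rw [this] at hD
          exact hD.unique (hasDerivAt_const z (f₁' 0))
        have hgf2 : ∀ z, g z * f₂ z = 0 := by
          intro z
          have := hgf1 z
          rw [hc z]
          calc g z * (k * f₁ z + c) = k * (g z * f₁ z) + g z * c := by ring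
            _ = k * 0 + g z * c := by rw [this]
            _ = g z * c := by ring
            _ = 0 := ?_
          -- need g z * c = 0 : from f₂' constant
          have hf2'const : f₂' = fun _ => k * f₁' 0 := by
            funext x
            rw [hf2' x, hf1'const x]
          have hD := hd₂' z
          rw [hf2'const] at hD
          have h0 := hD.unique (hasDerivAt_const z (k * f₁' 0))
          have hgz := hgf1 z
          rw [hc z] at h0
          linear_combination h0 - k * hgz
        by_cases hf1z : f₁ z₀ = 0
        · have hf2z : f₂ z₀ = c := by rw [hc z₀, hf1z]; ring
          have := hgf2 z₀
          rw [hf2z] at this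
          exact (mul_eq_zero.mp this).resolve_right hcne
        · exact (mul_eq_zero.mp (hgf1 z₀)).resolve_right hf1z
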